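/- With zero tokens, either every maximal colouring sequence on a communication graph G completes, or every maximal colouring sequence on G deadlocks; i.e., completion of one colouring sequence implies completion of all maximal colouring sequences. -/
import Mathlib


/-! Formal framework: communication graphs and the red/yellow/green colouring game
(Brodsky–Pedersen–Wagner, "On the Complexity of Buffer Allocation in Message Passing Systems"),
with receive-side token pools. -/

inductive Colour : Type
  | red | yellow | green
deriving DecidableEq

/-- A communication graph: vertices are partitioned into start/send/receive/end vertices,
`pred u v` means `u` is the component predecessor of `v` (a process arc `u → v`),
`matched u v` is a communication arc from send `u` to its matching receive `v`,
`comp v` is the index of the process component of `v`, and `pos v` is the position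
of `v` within its component chain. -/
structure CommGraph (V : Type) where
  isStart : V → Prop
  isSend : V → Prop
  isRecv : V → Prop
  isEnd : V → Prop
  pred : V → V → Prop
  matched : V → V → Prop
  comp : V → ℕ
  pos : V → ℕ

namespace CommGraph

variable {V : Type}

/-- An arc of the communication graph (process arc or communication arc). -/
def GArc (G : CommGraph V) (u v : V) : Prop := G.pred u v ∨ G.matched u v

/-- Well-formedness of a communication graph: the vertex kinds partition `V`,
components are chains (unique predecessors, positions increase along process arcs),
communication arcs go from sends to receives in different components and form a
partial matching, and the graph is acyclic (arcs admit no infinite descent). -/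
structure WF (G : CommGraph V) : Prop where
  kinds : ∀ v, G.isStart v ∨ G.isSend v ∨ G.isRecv v ∨ G.isEnd v
  start_not_send : ∀ v, G.isStart v → ¬ G.isSend v
  start_not_recv : ∀ v, G.isStart v → ¬ G.isRecv v
  start_not_end : ∀ v, G.isStart v → ¬ G.isEnd v
  send_not_recv : ∀ v, G.isSend v → ¬ G.isRecv v
  send_not_end : ∀ v, G.isSend v → ¬ G.isEnd v
  recv_not_end : ∀ v, G.isRecv v → ¬ G.isEnd v
  pred_unique : ∀ {u u' v}, G.pred u v → G.pred u' v → u = u'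
  pred_comp : ∀ {u v}, G.pred u v → G.comp u = G.comp v
  pred_pos : ∀ {u v}, G.pred u v → G.pos v = G.pos u + 1
  start_no_pred : ∀ {u v}, G.pred u v → ¬ G.isStart v
  has_pred : ∀ v, ¬ G.isStart v → ∃ u, G.pred u v
  matched_send : ∀ {u v}, G.matched u v → G.isSend u
  matched_recv : ∀ {u v}, G.matched u v → G.isRecv v
  matched_comp : ∀ {u v}, G.matched u v → G.comp u ≠ G.comp v
  matched_unique_left : ∀ {u u' v}, G.matched u v → G.matched u' v → u = u'
  matched_unique_right : ∀ {u v v'}, G.matched u v → G.matched u v' → v = v'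
  send_has_match : ∀ v, G.isSend v → ∃ w, G.matched v w
  recv_has_match : ∀ v, G.isRecv v → ∃ w, G.matched w v
  dag : WellFounded fun u v => G.GArc u v

end CommGraph

/-- A state of the colouring game: the colouring, which receive vertices currently
hold a token on their incident communication arc, and the number of available
tokens in each (per-process, receive-side) pool. -/
structure St (V : Type) where
  col : V → Colour
  tok : V → Bool
  pool : ℕ → ℕ

/-- The names of the colouring rules. -/
inductive Rule : Type
  | sendYel | recvYel | recvYelTok | sendGrn | recvGrn | endYel | endGrn
deriving DecidableEq

variable {V : Type}

/-- One move of the colouring game (receive-side buffering: the token used by the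
buffered-receive rule `recvYelTok` comes from the pool of the receiving component,
and is returned when the receive turns green). -/
inductive Step [DecidableEq V] (G : CommGraph V) : Rule → St V → St V → Prop
  | sendYel {s : St V} {v u : V} :
      G.isSend v → s.col v = .red → G.pred u v → s.col u = .green →
      Step G .sendYel s ⟨Function.update s.col v .yellow, s.tok, s.pool⟩
  | recvYel {s : St V} {v u w : V} :
      G.isRecv v → s.col v = .red → G.matched w v → s.col w = .yellow →
      G.pred u v → s.col u = .green →
      Step G .recvYel s ⟨Function.update s.col v .yellow, s.tok, s.pool⟩
  | recvYelTok {s : St V} {v w : V} :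
      G.isRecv v → s.col v = .red → G.matched w v → s.col w = .yellow →
      0 < s.pool (G.comp v) →
      Step G .recvYelTok s ⟨Function.update s.col v .yellow,
        Function.update s.tok v true,
        Function.update s.pool (G.comp v) (s.pool (G.comp v) - 1)⟩
  | sendGrn {s : St V} {v r : V} :
      G.isSend v → s.col v = .yellow → G.matched v r → s.col r = .yellow →
      Step G .sendGrn s ⟨Function.update s.col v .green, s.tok, s.pool⟩
  | recvGrn {s : St V} {v u w : V} :
      G.isRecv v → s.col v = .yellow → G.pred u v → s.col u = .green →
      G.matched w v → s.col w = .green →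
      Step G .recvGrn s ⟨Function.update s.col v .green,
        Function.update s.tok v false,
        if s.tok v then
          Function.update s.pool (G.comp v) (s.pool (G.comp v) + 1)
        else s.pool⟩
  | endYel {s : St V} {v u : V} :
      G.isEnd v → s.col v = .red → G.pred u v → s.col u = .green →
      Step G .endYel s ⟨Function.update s.col v .yellow, s.tok, s.pool⟩
  | endGrn {s : St V} {v : V} :
      G.isEnd v → s.col v = .yellow →
      Step G .endGrn s ⟨Function.update s.col v .green, s.tok, s.pool⟩

/-- `IsSeq G s l` : the list `l` of (rule, state) pairs is a valid colouring sequence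
starting from state `s`. -/
def IsSeq [DecidableEq V] (G : CommGraph V) : St V → List (Rule × St V) → Prop
  | _, [] => True
  | s, p :: l => Step G p.1 s p.2 ∧ IsSeq G p.2 l

/-- The list of states visited by a colouring sequence. -/
def states (s0 : St V) (l : List (Rule × St V)) : List (St V) :=
  s0 :: l.map Prod.snd

/-- The final state of a colouring sequence. -/
def finalSt (s0 : St V) (l : List (Rule × St V)) : St V :=
  (states s0 l).getLast (by simp [states])

open Classical in
/-- The initial state: start vertices green, all others red, no tokens placed,
token pools given by the token assignment `B` (pool of component `i` holds `B i`). -/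
noncomputable def init (G : CommGraph V) (B : ℕ → ℕ) : St V :=
  ⟨fun v => if G.isStart v then Colour.green else Colour.red, fun _ => false, B⟩

/-- A state from which no colouring rule applies. -/
def MaximalFrom [DecidableEq V] (G : CommGraph V) (s : St V) : Prop :=
  ∀ ρ t, ¬ Step G ρ s t

/-- A state is complete when every vertex is green. -/
def Completes (s : St V) : Prop := ∀ v, s.col v = Colour.green

/-- A deadlocking colouring sequence from `s0`: a maximal sequence whose final
colouring has a non-green vertex. -/
def Deadlocks [DecidableEq V] (G : CommGraph V) (s0 : St V) (l : List (Rule × St V)) : Prop :=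
  IsSeq G s0 l ∧ MaximalFrom G (finalSt s0 l) ∧ ¬ Completes (finalSt s0 l)

/-- The system is safe (deadlock free) under token assignment `B`:
every maximal colouring sequence completes. -/
def DeadlockFree [DecidableEq V] (G : CommGraph V) (B : ℕ → ℕ) : Prop :=
  ∀ l, IsSeq G (init G B) l → MaximalFrom G (finalSt (init G B) l) →
    Completes (finalSt (init G B) l)

/-- A state blocks: some yellow send has a matching red receive to which the
buffered-receive rule cannot be applied (no token available). -/
def Blocked (G : CommGraph V) (s : St V) : Prop :=
  ∃ v r, G.matched v r ∧ s.col v = Colour.yellow ∧ s.col r = Colour.red ∧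
    s.pool (G.comp r) = 0

/-- The graph is block free under token assignment `B`: no colouring sequence blocks. -/
def BlockFree [DecidableEq V] (G : CommGraph V) (B : ℕ → ℕ) : Prop :=
  ∀ l, IsSeq G (init G B) l → ¬ Blocked G (finalSt (init G B) l)



section Aux

variable {V : Type}

/-- Rank of a colour. -/
def crank : Colour → ℕ
  | .red => 0 | .yellow => 1 | .green => 2

lemma crank_green {c : Colour} (h : 2 ≤ crank c) : c = Colour.green := by
  cases c <;> simp [crank] at h ⊢

lemma crank_mono_green {s t : St V} {u : V}
    (h : crank (s.col u) ≤ crank (t.col u)) (hu : s.col u = Colour.green) :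
    t.col u = Colour.green := by
  apply crank_green; rw [hu] at h; exact h

lemma finalSt_cons (s : St V) (p : Rule × St V) (l : List (Rule × St V)) :
    finalSt s (p :: l) = finalSt p.2 l := by
  simp [finalSt, states, List.getLast_cons]

lemma crank_upd_le [DecidableEq V] {c : V → Colour} {x : V} {a b : Colour}
    (hx : c x = a) (hab : crank a ≤ crank b) :
    ∀ v, crank (c v) ≤ crank (Function.update c x b v) := by
  intro v
  by_cases hvx : v = x
  · subst hvx; rw [Function.update_self, hx]; exact hab
  · rw [Function.update_of_ne hvx]

/-- Steps never decrease colours. -/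
lemma step_mono [DecidableEq V] {G : CommGraph V} {ρ : Rule} {s s' : St V}
    (h : Step G ρ s s') : ∀ v, crank (s.col v) ≤ crank (s'.col v) := by
  cases h with
  | sendYel hsend hred hpred hu => exact crank_upd_le hred (by decide)
  | recvYel hrecv hred hm hw hpred hu => exact crank_upd_le hred (by decide)
  | recvYelTok hrecv hred hm hw hpos => exact crank_upd_le hred (by decide)
  | sendGrn hsend hyel hm hr => exact crank_upd_le hyel (by decide)
  | recvGrn hrecv hyel hpred hu hm hw => exact crank_upd_le hyel (by decide)
  | endYel hend hred hpred hu => exact crank_upd_le hred (by decide)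
  | endGrn hend hyel => exact crank_upd_le hyel (by decide)

lemma seq_mono [DecidableEq V] {G : CommGraph V} :
    ∀ (l : List (Rule × St V)) (s : St V), IsSeq G s l →
      ∀ v, crank (s.col v) ≤ crank ((finalSt s l).col v)
  | [], s, _, v => by simp [finalSt, states]
  | p :: l, s, h, v => by
    rw [finalSt_cons]
    exact le_trans (step_mono h.1 v) (seq_mono l p.2 h.2 v)

/-- The invariant pair about matched edges, on a colouring. -/
def InvC (G : CommGraph V) (c : V → Colour) : Prop :=
  (∀ w v, G.matched w v → c w = Colour.green → c v ≠ Colour.red) ∧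
  (∀ w v, G.matched w v → c v = Colour.green → c w = Colour.green)

/-- The invariant pair on a state. -/
def InvP (G : CommGraph V) (s : St V) : Prop := InvC G s.col

lemma invC_upd_yellow [DecidableEq V] {G : CommGraph V} {c : V → Colour} {x : V}
    (hx : c x = Colour.red) (h : InvC G c) :
    InvC G (Function.update c x Colour.yellow) := by
  obtain ⟨h1, h2⟩ := h
  constructor
  · intro w v hm hw
    rw [Function.update_apply] at hw ⊢
    by_cases hvx : v = x
    · rw [if_pos hvx]; simp
    · rw [if_neg hvx]
      by_cases hwx : w = x
      · rw [if_pos hwx] at hw; exact absurd hw (by simp)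
      · rw [if_neg hwx] at hw; exact h1 w v hm hw
  · intro w v hm hv
    rw [Function.update_apply] at hv ⊢
    by_cases hvx : v = x
    · rw [if_pos hvx] at hv; exact absurd hv (by simp)
    · rw [if_neg hvx] at hv
      have hw := h2 w v hm hv
      by_cases hwx : w = x
      · rw [hwx, hx] at hw; exact absurd hw (by simp)
      · rw [if_neg hwx]; exact hw

lemma invP_step [DecidableEq V] {G : CommGraph V} (hwf : G.WF) {ρ : Rule} {s s' : St V}
    (hstep : Step G ρ s s') (h : InvP G s) : InvP G s' := by
  obtain ⟨H1, H2⟩ := h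
  cases hstep with
  | sendYel hsend hred hpred hu => exact invC_upd_yellow hred ⟨H1, H2⟩
  | recvYel hrecv hred hm hw hpred hu => exact invC_upd_yellow hred ⟨H1, H2⟩
  | recvYelTok hrecv hred hm hw hpos => exact invC_upd_yellow hred ⟨H1, H2⟩
  | endYel hend hred hpred hu => exact invC_upd_yellow hred ⟨H1, H2⟩
  | @sendGrn _ x r hsend hyel hm0 hr =>
    constructor
    · intro w v hm hw
      replace hw : Function.update s.col x Colour.green w = Colour.green := hw
      show Function.update s.col x Colour.green v ≠ Colour.red
      rw [Function.update_apply] at hw ⊢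
      by_cases hvx : v = x
      · rw [if_pos hvx]; simp
      · rw [if_neg hvx]
        by_cases hwx : w = x
        · rw [hwx] at hm
          have hvr : v = r := hwf.matched_unique_right hm hm0
          rw [hvr, hr]; simp
        · rw [if_neg hwx] at hw; exact H1 w v hm hw
    · intro w v hm hv
      replace hv : Function.update s.col x Colour.green v = Colour.green := hv
      show Function.update s.col x Colour.green w = Colour.green
      rw [Function.update_apply] at hv ⊢
      by_cases hvx : v = x
      · rw [hvx] at hm
        exact absurd (hwf.matched_recv hm) (hwf.send_not_recv x hsend)
      · rw [if_neg hvx] at hv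
        have hw2 := H2 w v hm hv
        by_cases hwx : w = x
        · rw [if_pos hwx]
        · rw [if_neg hwx]; exact hw2
  | @recvGrn _ x u w0 hrecv hyel hpred hu hm0 hw0 =>
    constructor
    · intro w v hm hw
      replace hw : Function.update s.col x Colour.green w = Colour.green := hw
      show Function.update s.col x Colour.green v ≠ Colour.red
      rw [Function.update_apply] at hw ⊢
      by_cases hvx : v = x
      · rw [if_pos hvx]; simp
      · rw [if_neg hvx]
        by_cases hwx : w = x
        · rw [hwx] at hm
          exact absurd (hwf.matched_send hm) (fun hs => hwf.send_not_recv x hs hrecv)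
        · rw [if_neg hwx] at hw; exact H1 w v hm hw
    · intro w v hm hv
      replace hv : Function.update s.col x Colour.green v = Colour.green := hv
      show Function.update s.col x Colour.green w = Colour.green
      rw [Function.update_apply] at hv ⊢
      by_cases hvx : v = x
      · rw [hvx] at hm
        have hwe : w = w0 := hwf.matched_unique_left hm hm0
        rw [hwe]
        by_cases hw0x : w0 = x
        · rw [if_pos hw0x]
        · rw [if_neg hw0x]; exact hw0
      · rw [if_neg hvx] at hv
        have hw2 := H2 w v hm hv
        by_cases hwx : w = x
        · rw [if_pos hwx]
        · rw [if_neg hwx]; exact hw2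
  | @endGrn _ x hend hyel =>
    constructor
    · intro w v hm hw
      replace hw : Function.update s.col x Colour.green w = Colour.green := hw
      show Function.update s.col x Colour.green v ≠ Colour.red
      rw [Function.update_apply] at hw ⊢
      by_cases hvx : v = x
      · rw [if_pos hvx]; simp
      · rw [if_neg hvx]
        by_cases hwx : w = x
        · rw [hwx] at hm
          exact absurd (hwf.matched_send hm) (fun hs => hwf.send_not_end x hs hend)
        · rw [if_neg hwx] at hw; exact H1 w v hm hw
    · intro w v hm hv
      replace hv : Function.update s.col x Colour.green v = Colour.green := hv
      show Function.update s.col x Colour.green w = Colour.green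
      rw [Function.update_apply] at hv ⊢
      by_cases hvx : v = x
      · rw [hvx] at hm
        exact absurd (hwf.matched_recv hm) (fun hr => hwf.recv_not_end x hr hend)
      · rw [if_neg hvx] at hv
        have hw2 := H2 w v hm hv
        by_cases hwx : w = x
        · rw [if_pos hwx]
        · rw [if_neg hwx]; exact hw2

open Classical in
lemma invP_init [DecidableEq V] (G : CommGraph V) (hwf : G.WF) (B : ℕ → ℕ) :
    InvP G (init G B) := by
  constructor
  · intro w v hm hw
    have hns : ¬ G.isStart w := fun h => hwf.start_not_send w h (hwf.matched_send hm)
    replace hw : (if G.isStart w then Colour.green else Colour.red) = Colour.green := hw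
    rw [if_neg hns] at hw
    exact absurd hw (by simp)
  · intro w v hm hv
    have hns : ¬ G.isStart v := fun h => hwf.start_not_recv v h (hwf.matched_recv hm)
    replace hv : (if G.isStart v then Colour.green else Colour.red) = Colour.green := hv
    rw [if_neg hns] at hv
    exact absurd hv (by simp)

lemma invP_seq [DecidableEq V] {G : CommGraph V} (hwf : G.WF) :
    ∀ (l : List (Rule × St V)) (s : St V), IsSeq G s l → InvP G s →
      InvP G (finalSt s l)
  | [], s, _, h => by simpa [finalSt, states] using h
  | p :: l, s, hseq, h => by
    rw [finalSt_cons]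
    exact invP_seq hwf l p.2 hseq.2 (invP_step hwf hseq.1 h)

/-- Key lemma: the final state of a maximal run dominates any zero-token run. -/
lemma key [DecidableEq V] {G : CommGraph V} (hwf : G.WF) (t : St V)
    (hmax : MaximalFrom G t) (hI : InvP G t) :
    ∀ (l : List (Rule × St V)) (s : St V), IsSeq G s l →
      (∀ v, s.tok v = false) → (∀ i, s.pool i = 0) →
      (∀ v, crank (s.col v) ≤ crank (t.col v)) →
      ∀ v, crank ((finalSt s l).col v) ≤ crank (t.col v) := by
  intro l
  induction l with
  | nil => intro s _ _ _ hle v; simpa [finalSt, states] using hle v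
  | cons p l ih =>
    intro s hseq htok hpool hle
    obtain ⟨hstep, htail⟩ := hseq
    obtain ⟨ρ, s'⟩ := p
    rw [finalSt_cons]
    cases hstep with
    | @sendYel _ x u hsend hred hpred hu =>
      refine ih _ htail htok hpool ?_
      intro v
      show crank (Function.update s.col x Colour.yellow v) ≤ crank (t.col v)
      rw [Function.update_apply]
      by_cases hvx : v = x
      · rw [if_pos hvx, hvx]
        cases hcx : t.col x with
        | red =>
          exact absurd (Step.sendYel hsend hcx hpred (crank_mono_green (hle u) hu))
            (hmax _ _)
        | yellow => simp [crank]
        | green => simp [crank]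
      · rw [if_neg hvx]; exact hle v
    | @recvYel _ x u w hrecv hred hm hw hpred hu =>
      refine ih _ htail htok hpool ?_
      intro v
      show crank (Function.update s.col x Colour.yellow v) ≤ crank (t.col v)
      rw [Function.update_apply]
      by_cases hvx : v = x
      · rw [if_pos hvx, hvx]
        cases hcx : t.col x with
        | red =>
          exfalso
          have hu' : t.col u = Colour.green := crank_mono_green (hle u) hu
          have hwle := hle w
          rw [hw] at hwle
          cases hcw : t.col w with
          | red => rw [hcw] at hwle; simp [crank] at hwle
          | yellow => exact hmax _ _ (Step.recvYel hrecv hcx hm hcw hpred hu')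
          | green => exact hI.1 w x hm hcw hcx
        | yellow => simp [crank]
        | green => simp [crank]
      · rw [if_neg hvx]; exact hle v
    | @recvYelTok _ x w hrecv hred hm hw hpos =>
      rw [hpool (G.comp x)] at hpos
      exact absurd hpos (lt_irrefl 0)
    | @sendGrn _ x r hsend hyel hm hr =>
      refine ih _ htail htok hpool ?_
      intro v
      show crank (Function.update s.col x Colour.green v) ≤ crank (t.col v)
      rw [Function.update_apply]
      by_cases hvx : v = x
      · rw [if_pos hvx, hvx]
        cases hcx : t.col x with
        | red =>
          have hxle := hle x; rw [hyel, hcx] at hxle; simp [crank] at hxle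
        | yellow =>
          exfalso
          have hrle := hle r
          rw [hr] at hrle
          cases hcr : t.col r with
          | red => rw [hcr] at hrle; simp [crank] at hrle
          | yellow => exact hmax _ _ (Step.sendGrn hsend hcx hm hcr)
          | green =>
            have := hI.2 x r hm hcr
            rw [hcx] at this
            exact absurd this (by simp)
        | green => simp [crank]
      · rw [if_neg hvx]; exact hle v
    | @recvGrn _ x u w hrecv hyel hpred hu hm hw =>
      refine ih _ htail ?_ ?_ ?_
      · intro v
        show Function.update s.tok x false v = false
        rw [Function.update_apply]
        by_cases hvx : v = x
        · rw [if_pos hvx]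
        · rw [if_neg hvx]; exact htok v
      · intro i
        show (if s.tok x = true then Function.update s.pool (G.comp x)
            (s.pool (G.comp x) + 1) else s.pool) i = 0
        rw [htok x, if_neg (by simp)]
        exact hpool i
      · intro v
        show crank (Function.update s.col x Colour.green v) ≤ crank (t.col v)
        rw [Function.update_apply]
        by_cases hvx : v = x
        · rw [if_pos hvx, hvx]
          cases hcx : t.col x with
          | red =>
            have hxle := hle x; rw [hyel, hcx] at hxle; simp [crank] at hxle
          | yellow =>
            exact absurd (Step.recvGrn hrecv hcx hpred (crank_mono_green (hle u) hu)
              hm (crank_mono_green (hle w) hw)) (hmax _ _)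
          | green => simp [crank]
        · rw [if_neg hvx]; exact hle v
    | @endYel _ x u hend hred hpred hu =>
      refine ih _ htail htok hpool ?_
      intro v
      show crank (Function.update s.col x Colour.yellow v) ≤ crank (t.col v)
      rw [Function.update_apply]
      by_cases hvx : v = x
      · rw [if_pos hvx, hvx]
        cases hcx : t.col x with
        | red =>
          exact absurd (Step.endYel hend hcx hpred (crank_mono_green (hle u) hu))
            (hmax _ _)
        | yellow => simp [crank]
        | green => simp [crank]
      · rw [if_neg hvx]; exact hle v
    | @endGrn _ x hend hyel =>
      refine ih _ htail htok hpool ?_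
      intro v
      show crank (Function.update s.col x Colour.green v) ≤ crank (t.col v)
      rw [Function.update_apply]
      by_cases hvx : v = x
      · rw [if_pos hvx, hvx]
        cases hcx : t.col x with
        | red =>
          have hxle := hle x; rw [hyel, hcx] at hxle; simp [crank] at hxle
        | yellow => exact absurd (Step.endGrn hend hcx) (hmax _ _)
        | green => simp [crank]
      · rw [if_neg hvx]; exact hle v

end Aux

/-- **Zero-token confluence.** With zero tokens, either every maximal colouring
sequence on a communication graph `G` completes or every maximal colouring
sequence deadlocks: completion of one colouring sequence implies completion of
all maximal colouring sequences. -/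
theorem zero_token_confluence {V : Type} [DecidableEq V] [Fintype V]
    (G : CommGraph V) (hwf : G.WF)
    (hc : ∃ l, IsSeq G (init G fun _ => 0) l ∧ Completes (finalSt (init G fun _ => 0) l)) :
    ∀ l, IsSeq G (init G fun _ => 0) l →
      MaximalFrom G (finalSt (init G fun _ => 0) l) →
      Completes (finalSt (init G fun _ => 0) l) := by
  obtain ⟨l0, hl0, hc0⟩ := hc
  intro l hl hmax
  have hI : InvP G (finalSt (init G fun _ => 0) l) :=
    invP_seq hwf l _ hl (invP_init G hwf _)
  have hmono := seq_mono l (init G fun _ => 0) hl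
  have hkey := key hwf _ hmax hI l0 (init G fun _ => 0) hl0
    (fun v => rfl) (fun i => rfl) hmono
  intro v
  have h := hkey v
  rw [hc0 v] at h
  exact crank_green h
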